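/- Let p be an odd prime and m ≥ 2. For every a ∈ F_{p^m} that does not lie in the prime subfield F_p, the number of d ∈ D(0) with Tr(a·d) ≠ 0 equals p^{m-2}(p-1). (That is, the codeword c(a) of the linear code C_{D(0)} has Hamming weight p^{m-2}(p-1).) -/

import Mathlib

open Finset

/-- Fibers of a surjective additive map on a finite group all have the same size,
namely `card G / card H`. -/
lemma fiber_card_mul {G H : Type*} [AddCommGroup G] [AddCommGroup H]
    [Fintype G] [Fintype H] [DecidableEq H] (f : G → H)
    (hadd : ∀ x y, f (x + y) = f x + f y) (hf : Function.Surjective f) (c : H) :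
    (Finset.univ.filter fun g => f g = c).card * Fintype.card H = Fintype.card G := by
  set f' : G →+ H := AddMonoidHom.mk' f hadd with hf'
  have hfe : ∀ g, f g = f' g := fun g => rfl
  have key : ∀ c₁ c₂ : H, (Finset.univ.filter fun g => f g = c₁).card
      = (Finset.univ.filter fun g => f g = c₂).card := by
    intro c₁ c₂
    obtain ⟨δ, hδ⟩ := hf (c₂ - c₁)
    apply Finset.card_nbij' (fun g => g + δ) (fun g => g - δ)
    · intro g hg
      simp only [mem_coe, mem_filter, mem_univ, true_and] at hg ⊢
      rw [hfe, map_add, ← hfe, ← hfe, hg, hδ]; abel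
    · intro g hg
      simp only [mem_coe, mem_filter, mem_univ, true_and] at hg ⊢
      rw [hfe, map_sub, ← hfe, ← hfe, hg, hδ]; abel
    · intro g _; simp
    · intro g _; simp
  have hsum : Fintype.card G = ∑ c' : H, (Finset.univ.filter fun g => f g = c').card := by
    rw [← Finset.card_univ (α := G),
      Finset.card_eq_sum_card_fiberwise (f := f) (fun g _ => Finset.mem_univ (f g))]
  rw [hsum, Finset.sum_congr rfl (fun c' _ => key c' c), Finset.sum_const, Finset.card_univ,
    smul_eq_mul, mul_comm]

/-- Let `p` be an odd prime and `m ≥ 2`. For every `a ∈ F_{p^m}` not in the prime subfield,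
the codeword `c(a)` of `C_{D(0)}` has Hamming weight `p^(m-2)·(p-1)`. -/
theorem weight_CD0_nonprime
    (p : ℕ) [Fact p.Prime] (hp2 : p ≠ 2) (m : ℕ) (hm : 2 ≤ m)
    (F : Type*) [Field F] [Fintype F] [DecidableEq F] [Algebra (ZMod p) F]
    (hcard : Fintype.card F = p ^ m)
    (a : F) (ha : a ∉ Set.range (algebraMap (ZMod p) F)) :
    (Finset.univ.filter fun d : F =>
        (d ≠ 0 ∧ Algebra.trace (ZMod p) F d = 0) ∧
          Algebra.trace (ZMod p) F (a * d) ≠ 0).card = p ^ (m - 2) * (p - 1) := by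
  set T := Algebra.trace (ZMod p) F with hT
  obtain ⟨u, hu⟩ := Algebra.trace_surjective (ZMod p) F 1
  -- smul rewriting helper
  have hsmul : ∀ (c : ZMod p) (x : F), algebraMap (ZMod p) F c * x = c • x := by
    intro c x; rw [Algebra.smul_def]
  -- key nondegeneracy: if T (b * d) = 0 for all d and b ≠ 0 then contradiction
  have hnondeg : ∀ b : F, b ≠ 0 → (∀ d : F, T (b * d) = 0) → False := by
    intro b hb hall
    have := hall (b⁻¹ * u)
    rw [← mul_assoc, mul_inv_cancel₀ hb, one_mul, hu] at this
    exact one_ne_zero this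
  -- there is v with T v = 0 and T (a v) ≠ 0
  obtain ⟨v, hv0, hva⟩ : ∃ v : F, T v = 0 ∧ T (a * v) ≠ 0 := by
    by_contra hcon
    push_neg at hcon
    have hall : ∀ d : F, T (a * d) = T d * T (a * u) := by
      intro d
      have h1 : T (d - T d • u) = 0 := by
        rw [map_sub, map_smul, hu, smul_eq_mul, mul_one, sub_self]
      have h2 := hcon _ h1
      rw [mul_sub, mul_smul_comm, map_sub, map_smul, smul_eq_mul, sub_eq_zero] at h2
      exact h2
    apply ha
    refine ⟨T (a * u), ?_⟩
    by_contra hne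
    refine hnondeg (a - algebraMap (ZMod p) F (T (a * u))) (sub_ne_zero.mpr ?_) ?_
    · exact fun h => hne h.symm
    · intro d
      rw [sub_mul, map_sub, hall d, hsmul, map_smul, smul_eq_mul, mul_comm, sub_self]
  -- normalize to w with T w = 0 and T (a w) = 1
  set w : F := (T (a * v))⁻¹ • v with hw
  have hw0 : T w = 0 := by rw [hw, map_smul, hv0, smul_zero]
  have hwa : T (a * w) = 1 := by
    rw [hw, mul_smul_comm, map_smul, smul_eq_mul, inv_mul_cancel₀ hva]
  -- the joint map is surjective
  set φ : F → ZMod p × ZMod p := fun d => (T d, T (a * d)) with hφ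
  have hφadd : ∀ x y : F, φ (x + y) = φ x + φ y := by
    intro x y; simp [hφ, mul_add, map_add, Prod.ext_iff]
  have hφsurj : Function.Surjective φ := by
    rintro ⟨α, β⟩
    have hu' : T u = 1 := hu
    refine ⟨α • u + (β - α * T (a * u)) • w, ?_⟩
    simp only [hφ, Prod.mk.injEq, mul_add, mul_smul_comm, map_add, map_smul, smul_eq_mul,
      hu', hw0, hwa]
    constructor <;> ring
  have hp : Fintype.card (ZMod p) = p := ZMod.card p
  have hppos : 0 < p := (Fact.out : p.Prime).pos
  -- count the fiber of T over 0
  have h1 : (Finset.univ.filter fun d : F => T d = 0).card * p = p ^ m := by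
    have := fiber_card_mul (H := ZMod p) T (map_add T)
      (Algebra.trace_surjective (ZMod p) F) 0
    rwa [hp, hcard] at this
  have h1' : (Finset.univ.filter fun d : F => T d = 0).card = p ^ (m - 1) := by
    have : p ^ m = p ^ (m - 1) * p := by
      rw [← pow_succ, Nat.sub_add_cancel (le_trans one_le_two hm)]
    rw [this] at h1
    exact Nat.eq_of_mul_eq_mul_right hppos h1
  -- count the fiber of φ over (0,0)
  have h2 : (Finset.univ.filter fun d : F => T d = 0 ∧ T (a * d) = 0).card * (p * p)
      = p ^ m := by
    have := fiber_card_mul (H := ZMod p × ZMod p) φ hφadd hφsurj 0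
    rw [Fintype.card_prod, hp, hcard] at this
    have hfeq : (Finset.univ.filter fun d : F => T d = 0 ∧ T (a * d) = 0)
        = (Finset.univ.filter fun g : F => φ g = 0) := by
      ext d
      simp [hφ, Prod.ext_iff]
    rw [hfeq, this]
  have h2' : (Finset.univ.filter fun d : F => T d = 0 ∧ T (a * d) = 0).card = p ^ (m - 2) := by
    have : p ^ m = p ^ (m - 2) * (p * p) := by
      rw [← mul_assoc, ← pow_succ, ← pow_succ]
      congr 1
      omega
    rw [this] at h2
    exact Nat.eq_of_mul_eq_mul_right (Nat.mul_pos hppos hppos) h2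
  -- rewrite the target filter as a set difference
  have hfilter : (Finset.univ.filter fun d : F =>
        (d ≠ 0 ∧ T d = 0) ∧ T (a * d) ≠ 0)
      = (Finset.univ.filter fun d : F => T d = 0) \
        (Finset.univ.filter fun d : F => T d = 0 ∧ T (a * d) = 0) := by
    ext d
    simp only [mem_filter, mem_sdiff, mem_univ, true_and]
    constructor
    · rintro ⟨⟨_, hd0⟩, hda⟩
      exact ⟨hd0, fun h => hda h.2⟩
    · rintro ⟨hd0, h⟩
      have hda : T (a * d) ≠ 0 := fun hz => h ⟨hd0, hz⟩
      refine ⟨⟨?_, hd0⟩, hda⟩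
      rintro rfl
      apply hda
      rw [mul_zero, map_zero]
  rw [hfilter, Finset.card_sdiff_of_subset]
  · rw [h1', h2']
    have hm1 : p ^ (m - 1) = p ^ (m - 2) * p := by
      rw [← pow_succ]; congr 1; omega
    rw [hm1, Nat.mul_sub, mul_one]
  · intro d hd
    simp only [mem_filter, mem_univ, true_and] at hd ⊢
    exact hd.1
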